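/- The additive integrality gap of Q'_n is 0.75n; that is, the optimal value of the LP relaxation of Q'_n (equal to 6.75n) minus the optimal value of the mixed-integer program Q'_n (equal to 6n) is 0.75n. -/

import Mathlib

/-- The polytope `P = {(x,y) ∈ [0,1]² | -7x + y ≤ 0.3, 5x + 8y ≤ 8.5, 3x + 2y ≤ 3.7}`. -/
def P : Set (ℝ × ℝ) :=
  {p | 0 ≤ p.1 ∧ p.1 ≤ 1 ∧ 0 ≤ p.2 ∧ p.2 ≤ 1 ∧
    -7 * p.1 + p.2 ≤ 0.3 ∧ 5 * p.1 + 8 * p.2 ≤ 8.5 ∧ 3 * p.1 + 2 * p.2 ≤ 3.7}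

/-- `(x, y)` has integer coordinates. -/
def IsIntPt (p : ℝ × ℝ) : Prop := (∃ a : ℤ, p.1 = a) ∧ (∃ b : ℤ, p.2 = b)

/-- Feasibility for the MIP `Q'_n`: `(xᵢ, yᵢ) ∈ P ∩ ℤ²` for all `i`,
`13xᵢ + 10yᵢ ≤ z` for all `i`, and `z ≤ 14`. -/
def Q'nFeas (n : ℕ) (xy : Fin n → ℝ × ℝ) (z : ℝ) : Prop :=
  (∀ i, xy i ∈ P ∧ IsIntPt (xy i) ∧ 13 * (xy i).1 + 10 * (xy i).2 ≤ z) ∧ z ≤ 14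

/-- Feasibility for the LP relaxation of `Q'_n` (integrality dropped). -/
def Q'nLPFeas (n : ℕ) (xy : Fin n → ℝ × ℝ) (z : ℝ) : Prop :=
  (∀ i, xy i ∈ P ∧ 13 * (xy i).1 + 10 * (xy i).2 ≤ z) ∧ z ≤ 14

/-- The objective of `Q'_n`: `6 ∑ xᵢ + 5 ∑ yᵢ`. -/
noncomputable def QnObj (n : ℕ) (xy : Fin n → ℝ × ℝ) : ℝ :=
  6 * ∑ i, (xy i).1 + 5 * ∑ i, (xy i).2

lemma lp_pt_bound (p : ℝ × ℝ) (z : ℝ) (hP : p ∈ P) (h13 : 13 * p.1 + 10 * p.2 ≤ z)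
    (hz : z ≤ 14) : 6 * p.1 + 5 * p.2 ≤ 6.75 := by
  obtain ⟨h1, h2, h3, h4, h5, h6, h7⟩ := hP
  norm_num at *
  linarith

lemma mip_pt_bound (p : ℝ × ℝ) (hP : p ∈ P) (hI : IsIntPt p) : 6 * p.1 + 5 * p.2 ≤ 6 := by
  obtain ⟨⟨a, ha⟩, ⟨b, hb⟩⟩ := hI
  obtain ⟨h1, h2, h3, h4, h5, h6, h7⟩ := hP
  rw [ha, hb] at *
  have ha0 : 0 ≤ a := by exact_mod_cast h1
  have ha1 : a ≤ 1 := by exact_mod_cast h2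
  have hb0 : 0 ≤ b := by exact_mod_cast h3
  have hb1 : b ≤ 1 := by exact_mod_cast h4
  interval_cases a <;> interval_cases b <;> norm_num at *

/-- The additive integrality gap of `Q'_n` is `0.75n`: the optimal value of the LP relaxation
of `Q'_n` is `6.75n`, the optimal value of the MIP `Q'_n` is `6n`, and their difference is
`0.75n`. -/
theorem Q'n_integrality_gap (n : ℕ) :
    IsGreatest {v : ℝ | ∃ (xy : Fin n → ℝ × ℝ) (z : ℝ), Q'nLPFeas n xy z ∧ QnObj n xy = v}
      (6.75 * n) ∧
    IsGreatest {v : ℝ | ∃ (xy : Fin n → ℝ × ℝ) (z : ℝ), Q'nFeas n xy z ∧ QnObj n xy = v}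
      (6 * n) ∧
    (6.75 : ℝ) * n - 6 * n = 0.75 * n := by
  refine ⟨⟨⟨fun _ => ((0.5 : ℝ), (0.75 : ℝ)), 14, ⟨fun i => ?_, by norm_num⟩, ?_⟩, ?_⟩,
    ⟨⟨fun _ => ((1 : ℝ), (0 : ℝ)), 14, ⟨fun i => ?_, by norm_num⟩, ?_⟩, ?_⟩, by ring⟩
  · refine ⟨?_, by norm_num⟩
    simp only [P, Set.mem_setOf_eq]
    norm_num
  · simp [QnObj, Finset.sum_const, Finset.card_univ, nsmul_eq_mul]
    ring
  · rintro v ⟨xy, z, ⟨hfeas, hz⟩, rfl⟩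
    have h : ∀ i, 6 * (xy i).1 + 5 * (xy i).2 ≤ 6.75 :=
      fun i => lp_pt_bound _ z (hfeas i).1 (hfeas i).2 hz
    calc QnObj n xy = ∑ i, (6 * (xy i).1 + 5 * (xy i).2) := by
          simp [QnObj, Finset.mul_sum, Finset.sum_add_distrib]
      _ ≤ ∑ _i : Fin n, (6.75 : ℝ) := Finset.sum_le_sum (fun i _ => h i)
      _ = 6.75 * n := by simp [Finset.sum_const, nsmul_eq_mul, mul_comm]
  · refine ⟨?_, ⟨⟨1, by norm_num⟩, ⟨0, by norm_num⟩⟩, by norm_num⟩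
    simp only [P, Set.mem_setOf_eq]
    norm_num
  · simp [QnObj, Finset.sum_const, Finset.card_univ, nsmul_eq_mul]
  · rintro v ⟨xy, z, ⟨hfeas, hz⟩, rfl⟩
    have h : ∀ i, 6 * (xy i).1 + 5 * (xy i).2 ≤ 6 :=
      fun i => mip_pt_bound _ (hfeas i).1 (hfeas i).2.1
    calc QnObj n xy = ∑ i, (6 * (xy i).1 + 5 * (xy i).2) := by
          simp [QnObj, Finset.mul_sum, Finset.sum_add_distrib]
      _ ≤ ∑ _i : Fin n, (6 : ℝ) := Finset.sum_le_sum (fun i _ => h i)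
      _ = 6 * n := by simp [Finset.sum_const, nsmul_eq_mul, mul_comm]
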